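/- Let f : ℝ → ℝ be a polynomial (or C³ function) and fix s ≠ 0. Define for ħ ≠ 0 the quantity E(ħ) = (1/ħ²)(2f(s²) − f((s − 2ħ)²) − f((s + 2ħ)²)) + (2/(s ħ))(f((s − 2ħ)²) − f((s + 2ħ)²)). Then E(ħ) tends to −16 s² f''(s²) − 24 f'(s²) as ħ → 0; equivalently, writing μ = s², the radial-part difference operator degenerates to the differential operator −16μ d²/dμ² − 24 d/dμ. -/

import Mathlib

open Filter Topology

private lemma neg_tendsto_punctured :
    Tendsto (fun h : ℝ => -h) (𝓝[≠] (0:ℝ)) (𝓝[≠] (0:ℝ)) := by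
  refine tendsto_nhdsWithin_of_tendsto_nhds_of_eventually_within _ ?_ ?_
  · simpa using (continuous_neg.tendsto (0:ℝ)).mono_left nhdsWithin_le_nhds
  · filter_upwards [self_mem_nhdsWithin] with h hh
    exact neg_ne_zero.mpr hh

private lemma key_limit (φ φd : ℝ → ℝ) (c2 : ℝ)
    (hφ : ∀ h, HasDerivAt φ (φd h) h) (hφd : HasDerivAt φd c2 0)
    (s : ℝ) (hs : s ≠ 0) :
    Tendsto (fun h : ℝ =>
        (1 / h ^ 2) * (2 * φ 0 - φ (-h) - φ h) + (2 / (s * h)) * (φ (-h) - φ h))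
      (𝓝[≠] 0) (𝓝 (-c2 - 4 * φd 0 / s)) := by
  -- slope limit for φ at 0
  have hS : Tendsto (fun h : ℝ => (φ h - φ 0) / h) (𝓝[≠] 0) (𝓝 (φd 0)) := by
    have := hasDerivAt_iff_tendsto_slope.mp (hφ 0)
    refine this.congr fun h => ?_
    simp [slope_def_field]
  have hS' : Tendsto (fun h : ℝ => (φ (-h) - φ 0) / (-h)) (𝓝[≠] 0) (𝓝 (φd 0)) :=
    hS.comp neg_tendsto_punctured
  -- slope limit for φd at 0, halved
  have hSd : Tendsto (fun h : ℝ => (φd h - φd 0) / (2 * h)) (𝓝[≠] 0) (𝓝 (c2 / 2)) := by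
    have := hasDerivAt_iff_tendsto_slope.mp hφd
    have h2 := this.div_const 2
    refine h2.congr fun h => ?_
    simp [slope_def_field, div_div, mul_comm]
  -- L'Hopital for ψ h / h^2 where ψ h = φ h - φ 0 - φd 0 * h
  have hψ : ∀ h : ℝ, HasDerivAt (fun x => φ x - φ 0 - φd 0 * x) (φd h - φd 0) h := by
    intro h
    exact (((hφ h).sub_const (φ 0)).sub ((hasDerivAt_id h).const_mul (φd 0))).congr_deriv (by ring)
  have hg : ∀ h : ℝ, HasDerivAt (fun x : ℝ => x ^ 2) (2 * h) h := by
    intro h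
    simpa using hasDerivAt_pow 2 h
  have T1 : Tendsto (fun h : ℝ => (φ h - φ 0 - φd 0 * h) / h ^ 2) (𝓝[≠] 0) (𝓝 (c2 / 2)) := by
    apply HasDerivAt.lhopital_zero_nhdsNE
        (f' := fun h => φd h - φd 0) (g' := fun h : ℝ => 2 * h)
    · filter_upwards with h using hψ h
    · filter_upwards with h using hg h
    · filter_upwards [self_mem_nhdsWithin] with h hh
      exact mul_ne_zero two_ne_zero hh
    · have : Tendsto (fun x => φ x - φ 0 - φd 0 * x) (𝓝 (0:ℝ)) (𝓝 (φ 0 - φ 0 - φd 0 * 0)) :=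
        ((hψ 0).continuousAt).tendsto
      simpa using this.mono_left nhdsWithin_le_nhds
    · have : Tendsto (fun x : ℝ => x ^ 2) (𝓝 (0:ℝ)) (𝓝 ((0:ℝ) ^ 2)) :=
        ((hg 0).continuousAt).tendsto
      simpa using this.mono_left nhdsWithin_le_nhds
    · exact hSd
  have T1' : Tendsto (fun h : ℝ => (φ (-h) - φ 0 - φd 0 * (-h)) / h ^ 2)
      (𝓝[≠] 0) (𝓝 (c2 / 2)) := by
    have := T1.comp neg_tendsto_punctured
    refine this.congr fun h => ?_
    simp [neg_sq]
  -- combine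
  have Tcomb := (T1.neg.sub T1').add ((hS'.neg.sub hS).const_mul (2 / s))
  have heq : (fun h : ℝ =>
      (-((φ h - φ 0 - φd 0 * h) / h ^ 2) - (φ (-h) - φ 0 - φd 0 * (-h)) / h ^ 2) +
        2 / s * (-((φ (-h) - φ 0) / (-h)) - (φ h - φ 0) / h)) =ᶠ[𝓝[≠] 0]
      (fun h : ℝ =>
        (1 / h ^ 2) * (2 * φ 0 - φ (-h) - φ h) + (2 / (s * h)) * (φ (-h) - φ h)) := by
    filter_upwards [self_mem_nhdsWithin] with h hh
    have hh' : (h : ℝ) ≠ 0 := hh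
    simp only [div_neg]
    field_simp
    ring
  have := Tcomb.congr' heq
  convert this using 2
  ring

/-- The radial-part difference operator degenerates as `ħ → 0` to the differential
operator `−16μ d²/dμ² − 24 d/dμ` evaluated at `μ = s²`. -/
theorem radial_part_classical_limit (f : ℝ → ℝ) (hf : ContDiff ℝ 3 f) (s : ℝ) (hs : s ≠ 0) :
    Tendsto (fun hb : ℝ =>
        (1 / hb ^ 2) * (2 * f (s ^ 2) - f ((s - 2 * hb) ^ 2) - f ((s + 2 * hb) ^ 2)) +
        (2 / (s * hb)) * (f ((s - 2 * hb) ^ 2) - f ((s + 2 * hb) ^ 2)))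
      (𝓝[≠] 0)
      (𝓝 (-16 * s ^ 2 * deriv (deriv f) (s ^ 2) - 24 * deriv f (s ^ 2))) := by
  have hf3 : (3 : WithTop ℕ∞) = 2 + 1 := by norm_num
  rw [hf3] at hf
  have hf' := contDiff_succ_iff_deriv.mp hf
  have hdf : Differentiable ℝ (deriv f) := hf'.2.2.differentiable (by norm_num)
  have hf1 : Differentiable ℝ f := hf'.1
  set φ : ℝ → ℝ := fun h => f ((s + 2 * h) ^ 2) with hφdef
  set φd : ℝ → ℝ := fun h => deriv f ((s + 2 * h) ^ 2) * (4 * (s + 2 * h)) with hφddef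
  have hu : ∀ h : ℝ, HasDerivAt (fun x : ℝ => (s + 2 * x) ^ 2) (4 * (s + 2 * h)) h := by
    intro h
    have h1 : HasDerivAt (fun x : ℝ => s + 2 * x) 2 h := by
      simpa using ((hasDerivAt_id h).const_mul 2).const_add s
    have := h1.pow 2
    exact this.congr_deriv (by norm_num; ring)
  have hφ : ∀ h, HasDerivAt φ (φd h) h := by
    intro h
    exact ((hf1 _).hasDerivAt).comp h (hu h)
  have hφd : HasDerivAt φd
      (deriv (deriv f) (s ^ 2) * (4 * s) * (4 * (s + 2 * 0)) +
        deriv f ((s + 2 * 0) ^ 2) * 8) 0 := by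
    have h1 : HasDerivAt (fun h : ℝ => deriv f ((s + 2 * h) ^ 2))
        (deriv (deriv f) ((s + 2 * 0) ^ 2) * (4 * (s + 2 * 0))) 0 :=
      ((hdf _).hasDerivAt).comp 0 (hu 0)
    have h2 : HasDerivAt (fun h : ℝ => 4 * (s + 2 * h)) 8 0 := by
      have := (((hasDerivAt_id (0:ℝ)).const_mul 2).const_add s).const_mul 4
      exact this.congr_deriv (by norm_num)
    have := h1.mul h2
    exact this.congr_deriv (by norm_num)
  have key := key_limit φ φd _ hφ hφd s hs
  have harg : ∀ h : ℝ, φ (-h) = f ((s - 2 * h) ^ 2) := by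
    intro h
    simp only [hφdef]
    ring_nf
  have hval : φ 0 = f (s ^ 2) := by simp [hφdef]
  have heq2 : (fun h : ℝ =>
      (1 / h ^ 2) * (2 * φ 0 - φ (-h) - φ h) + (2 / (s * h)) * (φ (-h) - φ h)) =
      (fun hb : ℝ =>
        (1 / hb ^ 2) * (2 * f (s ^ 2) - f ((s - 2 * hb) ^ 2) - f ((s + 2 * hb) ^ 2)) +
        (2 / (s * hb)) * (f ((s - 2 * hb) ^ 2) - f ((s + 2 * hb) ^ 2))) := by
    funext h
    rw [harg, hval]
  rw [heq2] at key
  convert key using 2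
  simp only [hφddef]
  norm_num
  field_simp
  ring
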